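/- Let (B, σ, D) be a Harnisch–Kirchberg system and let J be a semi-invariant closed two-sided ideal of D. Then σ^i(j)·σ^k(e) ∈ σ^{max(i,k)}(J) for all i, k ∈ ℤ, j ∈ J, e ∈ D; and consequently J_σ is a closed two-sided ideal of the C*-algebra D_σ satisfying σ(J_σ) = J_σ. -/

import Mathlib

noncomputable section

variable {B : Type*} [NonUnitalCStarAlgebra B]

set_option maxHeartbeats 1000000

noncomputable instance : Group (B ≃⋆ₐ[ℂ] B) where
  mul f g := g.trans f
  one := StarAlgEquiv.refl _ _
  inv := StarAlgEquiv.symm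
  mul_assoc f g h := rfl
  one_mul f := rfl
  mul_one f := rfl
  inv_mul_cancel f := by ext x; exact f.symm_apply_apply x

/-- The norm-closed linear span of `{x * y : x ∈ X, y ∈ Y}`. -/
def mulSpan (X Y : Set B) : Set B :=
  closure ↑(Submodule.span ℂ {z : B | ∃ x ∈ X, ∃ y ∈ Y, z = x * y})

/-- `D_{k,ℓ}`: sums `x_{k-1} + ⋯ + x_{ℓ-1}` with `x_j ∈ σ^j(D)`. -/
def Dfin (σ : B ≃⋆ₐ[ℂ] B) (D : Set B) (k ℓ : ℤ) : Set B :=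
  {x | ∃ f : ℤ → B, (∀ j ∈ Finset.Icc (k-1) (ℓ-1), f j ∈ ⇑(σ ^ j) '' D) ∧
      x = ∑ j ∈ Finset.Icc (k-1) (ℓ-1), f j}

/-- `D_{k,∞}`. -/
def DInfR (σ : B ≃⋆ₐ[ℂ] B) (D : Set B) (k : ℤ) : Set B :=
  closure (⋃ n : ℕ, Dfin σ D k (k + n))

/-- `D_{-∞,k}`. -/
def DInfL (σ : B ≃⋆ₐ[ℂ] B) (D : Set B) (k : ℤ) : Set B :=
  closure (⋃ n : ℕ, Dfin σ D (k - n) k)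

/-- `D_σ`. -/
def Dsig (σ : B ≃⋆ₐ[ℂ] B) (D : Set B) : Set B :=
  closure (⋃ n : ℕ, Dfin σ D (-(n:ℤ)) n)

/-- Norm-closed *-subalgebra, as a predicate on subsets. -/
def IsCStarSubset (S : Set B) : Prop :=
  IsClosed S ∧ (0:B) ∈ S ∧ (∀ x ∈ S, ∀ y ∈ S, x + y ∈ S) ∧
    (∀ (c : ℂ), ∀ x ∈ S, c • x ∈ S) ∧ (∀ x ∈ S, ∀ y ∈ S, x * y ∈ S) ∧
    (∀ x ∈ S, star x ∈ S)

/-- Harnisch–Kirchberg system. -/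
def IsHKSystem (σ : B ≃⋆ₐ[ℂ] B) (D : Set B) : Prop :=
  IsCStarSubset D ∧
  mulSpan D (⇑σ '' D) = ⇑σ '' D ∧
  D ∩ ⇑σ '' D = {0} ∧
  (∀ d ∈ D, (∀ e ∈ D, d * σ e = 0 ∧ σ e * d = 0) → d = 0)

/-- Closed two-sided ideal `I` of a C*-subalgebra `C` (both given as subsets). -/
def IsClosedIdealIn (C I : Set B) : Prop :=
  I ⊆ C ∧ IsClosed I ∧ (0:B) ∈ I ∧ (∀ x ∈ I, ∀ y ∈ I, x + y ∈ I) ∧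
    (∀ (c : ℂ), ∀ x ∈ I, c • x ∈ I) ∧ (∀ c ∈ C, ∀ j ∈ I, c * j ∈ I ∧ j * c ∈ I)

/-- Essential closed two-sided ideal. -/
def IsEssentialIdealIn (C I : Set B) : Prop :=
  IsClosedIdealIn C I ∧ ∀ x ∈ C, (∀ j ∈ I, x * j = 0 ∧ j * x = 0) → x = 0



open Filter Topology

-- ==================== auxiliary lemmas ====================

private lemma hk_bern (u : ℝ) (hu1 : u ≤ 1) (k : ℕ) : (1-u)^k * (1 + k*u) ≤ 1 := by
  induction k with
  | zero => norm_num
  | succ k ih =>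
    have h1 : (0:ℝ) ≤ (1-u)^k := pow_nonneg (by linarith) k
    have h2 : (1-u)^(k+1) * (1 + (k+1:ℕ)*u) = (1-u)^k * ((1-u)*(1+((k:ℝ)+1)*u)) := by
      push_cast; ring
    rw [h2]
    have h3 : (1-u)*(1+((k:ℝ)+1)*u) ≤ 1 + (k:ℝ)*u := by
      nlinarith [mul_nonneg (by positivity : (0:ℝ) ≤ (k:ℝ)+1) (sq_nonneg u)]
    calc (1-u)^k * ((1-u)*(1+((k:ℝ)+1)*u)) ≤ (1-u)^k * (1+(k:ℝ)*u) :=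
          mul_le_mul_of_nonneg_left h3 h1
      _ ≤ 1 := ih

private lemma hk_sbound (s : ℝ) (hs : |s| ≤ 1) (n : ℕ) (hn : 1 ≤ n) :
    |s| * (1-s^2)^(2*n) ≤ 1 / Real.sqrt (2*n) := by
  have hs2 : 0 ≤ s^2 := sq_nonneg s
  have hs2' : s^2 ≤ 1 := by
    have := abs_le.mp hs; nlinarith
  have hb := hk_bern (s^2) hs2' (2*n)
  have hpos : (0:ℝ) < 1 + ((2*n:ℕ):ℝ)*s^2 := by positivity
  have h1 : (1-s^2)^(2*n) ≤ 1/(1 + ((2*n:ℕ):ℝ)*s^2) := by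
    rw [le_div_iff₀ hpos]; exact hb
  have h2 : |s| * (1-s^2)^(2*n) ≤ |s| / (1 + ((2*n:ℕ):ℝ)*s^2) := by
    rw [div_eq_mul_one_div]
    exact mul_le_mul_of_nonneg_left h1 (abs_nonneg s)
  refine h2.trans ?_
  have hsq : (0:ℝ) < Real.sqrt (2*n) := Real.sqrt_pos.mpr (by positivity)
  rw [div_le_div_iff₀ hpos hsq]
  have hsqsq : Real.sqrt (2*n) * Real.sqrt (2*n) = 2*(n:ℝ) := Real.mul_self_sqrt (by positivity)
  push_cast
  nlinarith [sq_nonneg (Real.sqrt (2*(n:ℝ)) * |s| - 1), sq_abs s, abs_nonneg s, hsq.le]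

private lemma hk_exists_approx (x : B) :
    ∃ u : ℕ → B,
      (∀ (S : Set B), (0:B) ∈ S → (∀ p ∈ S, ∀ q ∈ S, p + q ∈ S) →
        (∀ (c : ℝ), ∀ p ∈ S, c • p ∈ S) → (star x * x) ∈ S →
        (∀ p ∈ S, (star x * x) * p ∈ S) → ∀ n, u n ∈ S) ∧
      (∀ n, IsSelfAdjoint (u n)) ∧
      Tendsto (fun n => x * u n) atTop (𝓝 x) := by
  by_cases hx0 : x = 0
  · refine ⟨fun _ => 0, fun S h0 _ _ _ _ _ => h0, fun _ => by simp [IsSelfAdjoint], ?_⟩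
    subst hx0
    simpa using tendsto_const_nhds
  set a : B := star x * x with ha_def
  have ha : IsSelfAdjoint a := IsSelfAdjoint.star_mul_self x
  set M : ℝ := ‖a‖ with hM_def
  have hM : 0 < M := by
    rw [hM_def, ha_def, CStarRing.norm_star_mul_self]
    have h := norm_pos_iff.mpr hx0
    positivity
  let r : ℕ → B := fun n => Nat.rec (0:B) (fun _ y => y + (M⁻¹^2) • (a*a - a*a*y)) n
  have hr0 : r 0 = 0 := rfl
  have hrS : ∀ n, r (n+1) = r n + (M⁻¹^2) • (a*a - a*a*(r n)) := fun n => rfl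
  set p : ℕ → ℝ → ℝ := fun n t => 1 - (1 - (t*M⁻¹)^2)^n with hp_def
  have hp0 : ∀ n, p n 0 = 0 := by intro n; simp [hp_def]
  have hpc : ∀ n, Continuous (p n) := by intro n; simp only [hp_def]; fun_prop
  have hr : ∀ n, r n = cfcₙ (p n) a := by
    intro n
    induction n with
    | zero =>
      have h : p 0 = fun _ : ℝ => (0:ℝ) := by ext t; simp [hp_def]
      rw [hr0, h, cfcₙ_const_zero]
    | succ n ih =>
      have e1 : cfcₙ (fun t : ℝ => t*t) a = a*a := by
        rw [cfcₙ_mul _ _ a, cfcₙ_id' ℝ a]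
      have e2 : cfcₙ (fun t : ℝ => (t*t) * p n t) a = a*a*(cfcₙ (p n) a) := by
        rw [cfcₙ_mul _ _ a (by fun_prop) (by simp) (hpc n).continuousOn (hp0 n), e1]
      have e3 : cfcₙ (fun t : ℝ => (t*t) - (t*t)* p n t) a = a*a - a*a*(cfcₙ (p n) a) := by
        rw [cfcₙ_sub _ _ a (by fun_prop) (by simp) (by fun_prop) (by simp [hp0 n]), e1, e2]
      have e4 : cfcₙ (fun t : ℝ => M⁻¹^2 * ((t*t) - (t*t)*p n t)) a
          = (M⁻¹^2) • (a*a - a*a*(cfcₙ (p n) a)) := by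
        rw [cfcₙ_const_mul _ _ a (by fun_prop) (by simp [hp0 n]), e3]
      have e5 : cfcₙ (fun t : ℝ => p n t + M⁻¹^2 * ((t*t) - (t*t)*p n t)) a
          = cfcₙ (p n) a + (M⁻¹^2) • (a*a - a*a*(cfcₙ (p n) a)) := by
        rw [cfcₙ_add _ _ a (hpc n).continuousOn (hp0 n) (by fun_prop) (by simp [hp0 n]), e4]
      have key : cfcₙ (p (n+1)) a
          = cfcₙ (fun t : ℝ => p n t + M⁻¹^2 * ((t*t) - (t*t) * p n t)) a := by
        apply cfcₙ_congr
        intro t _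
        simp only [hp_def]
        ring
      rw [hrS n, ih, key, e5]
  have hsa : ∀ n, IsSelfAdjoint (r n) := fun n => (hr n) ▸ cfcₙ_predicate (p n) a
  have hest : ∀ n, 1 ≤ n → ‖x - x * r n‖^2 ≤ M * (1 / Real.sqrt (2*n)) := by
    intro n hn
    have hy : star (x - x * r n) * (x - x * r n)
        = a - a * r n - r n * a + r n * (a * r n) := by
      rw [star_sub, star_mul, (hsa n).star_eq]
      rw [ha_def]
      noncomm_ring
    have hyc : star (x - x * r n) * (x - x * r n)
        = cfcₙ (fun t : ℝ => t * (1 - p n t)^2) a := by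
      have e1 : cfcₙ (fun t : ℝ => t * p n t) a = a * cfcₙ (p n) a := by
        rw [cfcₙ_mul _ _ a (by fun_prop) (by simp) (hpc n).continuousOn (hp0 n), cfcₙ_id' ℝ a]
      have e2 : cfcₙ (fun t : ℝ => p n t * t) a = cfcₙ (p n) a * a := by
        rw [cfcₙ_mul _ _ a (hpc n).continuousOn (hp0 n) (by fun_prop) (by simp), cfcₙ_id' ℝ a]
      have e3 : cfcₙ (fun t : ℝ => p n t * (t * p n t)) a
          = cfcₙ (p n) a * (a * cfcₙ (p n) a) := by
        rw [cfcₙ_mul _ _ a (hpc n).continuousOn (hp0 n) (by fun_prop) (by simp [hp0 n]), e1]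
      have e4 : cfcₙ (fun t : ℝ => t - t * p n t - p n t * t + p n t * (t * p n t)) a
          = a - a * cfcₙ (p n) a - cfcₙ (p n) a * a + cfcₙ (p n) a * (a * cfcₙ (p n) a) := by
        rw [cfcₙ_add _ _ a (by fun_prop) (by simp [hp0 n]) (by fun_prop) (by simp [hp0 n]),
          cfcₙ_sub _ _ a (by fun_prop) (by simp) (by fun_prop) (by simp [hp0 n]),
          cfcₙ_sub _ _ a (by fun_prop) (by simp) (by fun_prop) (by simp [hp0 n]),
          e1, e2, e3, cfcₙ_id' ℝ a]
      have key : cfcₙ (fun t : ℝ => t * (1 - p n t)^2) a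
          = cfcₙ (fun t : ℝ => t - t * p n t - p n t * t + p n t * (t * p n t)) a :=
        cfcₙ_congr (fun t _ => by ring)
      rw [hy, key, e4, ← hr n]
    have hnorm : ‖x - x * r n‖^2 = ‖cfcₙ (fun t : ℝ => t * (1 - p n t)^2) a‖ := by
      rw [← hyc, CStarRing.norm_star_mul_self, sq]
    rw [hnorm]
    have hbound : ∀ t ∈ quasispectrum ℝ a, ‖t * (1 - p n t)^2‖ ≤ M * (1 / Real.sqrt (2*n)) := by
      intro t ht
      have htM : |t| ≤ M := by
        have h := norm_apply_le_norm_cfcₙ (id : ℝ → ℝ) a ht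
        rw [cfcₙ_id ℝ a] at h
        simpa [hM_def] using h
      set s : ℝ := t * M⁻¹ with hs_def
      have hs1 : |s| ≤ 1 := by
        rw [hs_def, abs_mul, abs_inv, abs_of_pos hM]
        calc |t| * M⁻¹ ≤ M * M⁻¹ := by
              exact mul_le_mul_of_nonneg_right htM (by positivity)
          _ = 1 := mul_inv_cancel₀ hM.ne'
      have hts : t = M * s := by
        rw [hs_def]; field_simp
      have h1p : (1 - p n t)^2 = (1 - s^2)^(2*n) := by
        simp only [hp_def, hs_def]
        rw [sub_sub_cancel, ← pow_mul, mul_comm n 2]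
      rw [Real.norm_eq_abs, abs_mul, h1p, hts]
      have habs : |(1 - s ^ 2) ^ (2 * n)| = (1 - s^2)^(2*n) := by
        apply abs_of_nonneg
        apply pow_nonneg
        nlinarith [sq_abs s, abs_nonneg s, hs1]
      rw [habs, abs_mul, abs_of_pos hM, mul_assoc]
      exact mul_le_mul_of_nonneg_left (hk_sbound s hs1 n hn) hM.le
    exact norm_cfcₙ_le hbound
  have htend : Tendsto (fun n => x * r n) atTop (𝓝 x) := by
    have hb : Tendsto (fun n : ℕ => Real.sqrt (M * (1 / Real.sqrt (2*n)))) atTop (𝓝 0) := by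
      have h1 : Tendsto (fun n : ℕ => Real.sqrt (2*n)) atTop atTop := by
        rw [tendsto_atTop_atTop]
        intro b
        refine ⟨⌈b^2⌉₊, fun n hn => ?_⟩
        calc b ≤ Real.sqrt (b^2) := by
              rw [Real.sqrt_sq_eq_abs]; exact le_abs_self b
          _ ≤ Real.sqrt (2*n) := by
              apply Real.sqrt_le_sqrt
              have h := (Nat.le_ceil (b^2)).trans (by exact_mod_cast hn : ((⌈b^2⌉₊ : ℕ) : ℝ) ≤ n)
              nlinarith [Nat.cast_nonneg (α := ℝ) n]
      have h2 : Tendsto (fun n : ℕ => M * (1 / Real.sqrt (2*n))) atTop (𝓝 (M * 0)) := by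
        apply Tendsto.const_mul
        simp only [one_div]
        exact h1.inv_tendsto_atTop
      rw [mul_zero] at h2
      have h3 := (Real.continuous_sqrt.tendsto 0).comp h2
      rw [Real.sqrt_zero] at h3
      exact h3
    rw [tendsto_iff_norm_sub_tendsto_zero]
    apply squeeze_zero' (g := fun n : ℕ => Real.sqrt (M * (1 / Real.sqrt (2*n))))
      (Eventually.of_forall fun n => norm_nonneg _) ?_ hb
    filter_upwards [eventually_ge_atTop 1] with n hn
    rw [norm_sub_rev]
    have h := hest n hn
    calc ‖x - x * r n‖ = Real.sqrt (‖x - x * r n‖^2) := by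
          rw [Real.sqrt_sq (norm_nonneg _)]
      _ ≤ Real.sqrt (M * (1 / Real.sqrt (2*n))) := Real.sqrt_le_sqrt h
  have hmem : ∀ (S : Set B), (0:B) ∈ S → (∀ p ∈ S, ∀ q ∈ S, p + q ∈ S) →
      (∀ (c : ℝ), ∀ p ∈ S, c • p ∈ S) → a ∈ S →
      (∀ p ∈ S, a * p ∈ S) → ∀ n, r n ∈ S := by
    intro S h0 hadd hsmul haS hmul n
    induction n with
    | zero => exact h0
    | succ n ih =>
      rw [hrS n]
      apply hadd _ ih
      apply hsmul
      have haa : a * a ∈ S := hmul a haS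
      have haar : a * a * r n ∈ S := by
        rw [mul_assoc]
        exact hmul _ (hmul _ ih)
      have h : a*a - a*a*(r n) = a*a + (-1:ℝ) • (a*a*(r n)) := by
        rw [neg_one_smul, sub_eq_add_neg]
      rw [h]
      exact hadd _ haa _ (hsmul _ _ haar)
  exact ⟨r, hmem, hsa, htend⟩

private lemma hk_sae_isometry (φ : B ≃⋆ₐ[ℂ] B) : Isometry φ :=
  NonUnitalStarAlgHom.isometry φ (EquivLike.injective φ)

private lemma hk_sae_continuous (φ : B ≃⋆ₐ[ℂ] B) : Continuous φ := (hk_sae_isometry φ).continuous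

private def hkHomeo (φ : B ≃⋆ₐ[ℂ] B) : B ≃ₜ B :=
  { φ.toRingEquiv.toEquiv with
    continuous_toFun := hk_sae_continuous φ
    continuous_invFun := hk_sae_continuous φ.symm }

private lemma hkHomeo_coe (φ : B ≃⋆ₐ[ℂ] B) : ⇑(hkHomeo φ) = ⇑φ := rfl
private lemma hkHomeo_symm_coe (φ : B ≃⋆ₐ[ℂ] B) : ⇑(hkHomeo φ).symm = ⇑φ.symm := rfl

private lemma hk_zpow_add_apply (σ : B ≃⋆ₐ[ℂ] B) (i k : ℤ) (x : B) :
    (σ ^ (i + k)) x = (σ ^ i) ((σ ^ k) x) := by rw [zpow_add]; rfl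

private lemma hk_zpow_zero_apply (σ : B ≃⋆ₐ[ℂ] B) (x : B) : (σ ^ (0:ℤ)) x = x := by
  rw [zpow_zero]; rfl

private lemma hk_zpow_one_apply (σ : B ≃⋆ₐ[ℂ] B) (x : B) : (σ ^ (1:ℤ)) x = σ x := by
  rw [zpow_one]

private lemma hk_sae_symm_apply (σ : B ≃⋆ₐ[ℂ] B) (x : B) : σ.symm x = (σ ^ (-1:ℤ)) x := by
  rw [zpow_neg, zpow_one]; rfl

/-- closed subspace predicate -/
private def HkGood (T : Set B) : Prop :=
  IsClosed T ∧ (0:B) ∈ T ∧ (∀ x ∈ T, ∀ y ∈ T, x + y ∈ T) ∧ ∀ (c : ℂ), ∀ x ∈ T, c • x ∈ T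

private lemma hk_sae_image_eq_preimage (φ : B ≃⋆ₐ[ℂ] B) (T : Set B) :
    ⇑φ '' T = ⇑φ.symm ⁻¹' T := by
  ext z
  constructor
  · rintro ⟨t, ht, rfl⟩
    simpa [φ.symm_apply_apply] using ht
  · intro hz
    exact ⟨φ.symm z, hz, φ.apply_symm_apply z⟩

private lemma HkGood.image {T : Set B} (h : HkGood T) (φ : B ≃⋆ₐ[ℂ] B) : HkGood (⇑φ '' T) := by
  obtain ⟨hc, h0, hadd, hsmul⟩ := h
  refine ⟨?_, ⟨0, h0, map_zero φ⟩, ?_, ?_⟩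
  · rw [hk_sae_image_eq_preimage]
    exact hc.preimage (hk_sae_continuous φ.symm)
  · rintro _ ⟨t, ht, rfl⟩ _ ⟨t', ht', rfl⟩
    exact ⟨t + t', hadd t ht t' ht', map_add φ t t'⟩
  · rintro c _ ⟨t, ht, rfl⟩
    exact ⟨c • t, hsmul c t ht, map_smul φ c t⟩

private lemma hk_good_mulSpan (X Y : Set B) : HkGood (mulSpan X Y) := by
  refine ⟨isClosed_closure, subset_closure (Submodule.zero_mem _), ?_, ?_⟩
  · intro x hx y hy
    exact (Submodule.span ℂ {z : B | ∃ x ∈ X, ∃ y ∈ Y, z = x * y}).topologicalClosure.add_mem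
      (by exact hx) (by exact hy)
  · intro c x hx
    exact (Submodule.span ℂ {z : B | ∃ x ∈ X, ∃ y ∈ Y, z = x * y}).topologicalClosure.smul_mem c
      (by exact hx)

private lemma hk_mul_mem_mulSpan {X Y : Set B} {x y : B} (hx : x ∈ X) (hy : y ∈ Y) :
    x * y ∈ mulSpan X Y :=
  subset_closure (Submodule.subset_span ⟨x, hx, y, hy, rfl⟩)

/-- workhorse: push a (semi)linear continuous map through a `mulSpan`. -/
private lemma hk_mem_of_mulSpan {X Y T : Set B} (hT : HkGood T) (f : B → B)
    (hf : Continuous f) (hfadd : ∀ p q, f (p + q) = f p + f q)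
    (hfsmul : ∀ (c : ℂ) p, f (c • p) = c • f p ∨ f (c • p) = (starRingEnd ℂ c) • f p)
    (hgen : ∀ p ∈ X, ∀ q ∈ Y, f (p * q) ∈ T) :
    ∀ z ∈ mulSpan X Y, f z ∈ T := by
  intro z hz
  have hf0 : f 0 = 0 := by
    have h := hfadd 0 0
    simp only [add_zero] at h
    have h2 : f 0 + f 0 = 0 + f 0 := by rw [zero_add]; exact h.symm
    exact (add_right_cancel h2)
  let S : Submodule ℂ B :=
    { carrier := f ⁻¹' T
      zero_mem' := by simp only [Set.mem_preimage, hf0]; exact hT.2.1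
      add_mem' := fun {p} {q} hp hq => by
        simp only [Set.mem_preimage, hfadd] at *
        exact hT.2.2.1 _ hp _ hq
      smul_mem' := fun c p hp => by
        simp only [Set.mem_preimage] at *
        rcases hfsmul c p with h | h <;> rw [h]
        · exact hT.2.2.2 c _ hp
        · exact hT.2.2.2 _ _ hp }
  have h1 : (Submodule.span ℂ {z : B | ∃ x ∈ X, ∃ y ∈ Y, z = x * y} : Set B) ⊆ S := by
    have h : Submodule.span ℂ {z : B | ∃ x ∈ X, ∃ y ∈ Y, z = x * y} ≤ S := by
      rw [Submodule.span_le]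
      rintro _ ⟨p, hp, q, hq, rfl⟩
      exact hgen p hp q hq
    exact h
  have h2 : IsClosed (S : Set B) := hT.1.preimage hf
  exact closure_minimal h1 h2 hz

private lemma hk_Dfin_zero_mem (σ : B ≃⋆ₐ[ℂ] B) {S : Set B} (hS0 : (0:B) ∈ S) (k ℓ : ℤ) :
    (0:B) ∈ Dfin σ S k ℓ := by
  refine ⟨fun _ => 0, fun j _ => ⟨0, hS0, map_zero _⟩, ?_⟩
  rw [Finset.sum_const_zero]

private lemma hk_Dfin_mono (σ : B ≃⋆ₐ[ℂ] B) {S : Set B} (hS0 : (0:B) ∈ S) {k ℓ k' ℓ' : ℤ}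
    (hk : k' ≤ k) (hl : ℓ ≤ ℓ') : Dfin σ S k ℓ ⊆ Dfin σ S k' ℓ' := by
  rintro x ⟨f, hf, rfl⟩
  refine ⟨fun j => if j ∈ Finset.Icc (k-1) (ℓ-1) then f j else 0, ?_, ?_⟩
  · intro j _
    dsimp only
    by_cases h : j ∈ Finset.Icc (k-1) (ℓ-1)
    · rw [if_pos h]; exact hf j h
    · rw [if_neg h]; exact ⟨0, hS0, map_zero _⟩
  · calc ∑ j ∈ Finset.Icc (k-1) (ℓ-1), f j
        = ∑ j ∈ Finset.Icc (k-1) (ℓ-1),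
            (if j ∈ Finset.Icc (k-1) (ℓ-1) then f j else 0) :=
          Finset.sum_congr rfl fun j hj => (if_pos hj).symm
      _ = ∑ j ∈ Finset.Icc (k'-1) (ℓ'-1),
            (if j ∈ Finset.Icc (k-1) (ℓ-1) then f j else 0) :=
          Finset.sum_subset (Finset.Icc_subset_Icc (by omega) (by omega))
            (fun j _ hj => if_neg hj)

private lemma hk_Dfin_subset (σ : B ≃⋆ₐ[ℂ] B) {S S' : Set B} (h : S ⊆ S') (k ℓ : ℤ) :
    Dfin σ S k ℓ ⊆ Dfin σ S' k ℓ := by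
  rintro x ⟨f, hf, rfl⟩
  exact ⟨f, fun j hj => Set.image_mono h (hf j hj), rfl⟩

private lemma hk_Dfin_single (σ : B ≃⋆ₐ[ℂ] B) {S : Set B} (hS0 : (0:B) ∈ S) (p : ℤ) {y : B}
    (hy : y ∈ ⇑(σ^p) '' S) : y ∈ Dfin σ S p (p+1) := by
  refine ⟨fun j => if j = p then y else 0, ?_, ?_⟩
  · intro j _
    dsimp only
    by_cases h : j = p
    · rw [if_pos h, h]; exact hy
    · rw [if_neg h]; exact ⟨0, hS0, map_zero _⟩
  · rw [Finset.sum_ite_eq' (Finset.Icc (p-1) (p+1-1)) p (fun _ => y), if_pos]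
    exact Finset.mem_Icc.mpr ⟨by omega, by omega⟩

private lemma hk_Dfin_add (σ : B ≃⋆ₐ[ℂ] B) {S : Set B} (hSadd : ∀ x ∈ S, ∀ y ∈ S, x + y ∈ S)
    {k ℓ : ℤ} {x y : B} (hx : x ∈ Dfin σ S k ℓ) (hy : y ∈ Dfin σ S k ℓ) :
    x + y ∈ Dfin σ S k ℓ := by
  obtain ⟨f, hf, rfl⟩ := hx
  obtain ⟨g, hg, rfl⟩ := hy
  refine ⟨fun j => f j + g j, ?_, ?_⟩
  · intro j hj
    obtain ⟨s, hs, hse⟩ := hf j hj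
    obtain ⟨t, ht, hte⟩ := hg j hj
    exact ⟨s + t, hSadd s hs t ht, by rw [map_add, hse, hte]⟩
  · rw [Finset.sum_add_distrib]

private lemma hk_Dfin_smul (σ : B ≃⋆ₐ[ℂ] B) {S : Set B}
    (hSsmul : ∀ (c : ℂ), ∀ x ∈ S, c • x ∈ S)
    (c : ℂ) {k ℓ : ℤ} {x : B} (hx : x ∈ Dfin σ S k ℓ) : c • x ∈ Dfin σ S k ℓ := by
  obtain ⟨f, hf, rfl⟩ := hx
  refine ⟨fun j => c • f j, ?_, ?_⟩
  · intro j hj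
    obtain ⟨s, hs, hse⟩ := hf j hj
    exact ⟨c • s, hSsmul c s hs, by rw [map_smul, hse]⟩
  · rw [Finset.smul_sum]

private lemma hk_Dfin_shift (σ : B ≃⋆ₐ[ℂ] B) {S : Set B} {k ℓ : ℤ} {x : B}
    (hx : x ∈ Dfin σ S k ℓ) : σ x ∈ Dfin σ S (k+1) (ℓ+1) := by
  obtain ⟨f, hf, rfl⟩ := hx
  refine ⟨fun j => σ (f (j-1)), ?_, ?_⟩
  · intro j hj
    dsimp only
    simp only [Finset.mem_Icc] at hj
    obtain ⟨s, hs, hse⟩ := hf (j-1) (Finset.mem_Icc.mpr ⟨by omega, by omega⟩)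
    refine ⟨s, hs, ?_⟩
    have h1 : (1:ℤ) + (j - 1) = j := by ring
    rw [← hse, ← hk_zpow_one_apply σ, ← hk_zpow_add_apply, h1]
  · have himg : Finset.Icc (k+1-1) (ℓ+1-1) = (Finset.Icc (k-1) (ℓ-1)).image (· + 1) := by
      rw [Finset.image_add_right_Icc]
      congr 1 <;> ring
    rw [himg, Finset.sum_image (by intro a _ b _ h; have h' : a + 1 = b + 1 := h; omega), map_sum]
    apply Finset.sum_congr rfl
    intro j _
    norm_num

private lemma hk_Dfin_unshift (σ : B ≃⋆ₐ[ℂ] B) {S : Set B} {k ℓ : ℤ} {x : B}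
    (hx : x ∈ Dfin σ S k ℓ) : σ.symm x ∈ Dfin σ S (k-1) (ℓ-1) := by
  obtain ⟨f, hf, rfl⟩ := hx
  refine ⟨fun j => σ.symm (f (j+1)), ?_, ?_⟩
  · intro j hj
    dsimp only
    simp only [Finset.mem_Icc] at hj
    obtain ⟨s, hs, hse⟩ := hf (j+1) (Finset.mem_Icc.mpr ⟨by omega, by omega⟩)
    refine ⟨s, hs, ?_⟩
    have h1 : (-1:ℤ) + (j + 1) = j := by ring
    rw [← hse, hk_sae_symm_apply, ← hk_zpow_add_apply, h1]
  · have himg : Finset.Icc (k-1-1) (ℓ-1-1) = (Finset.Icc (k-1) (ℓ-1)).image (· + (-1)) := by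
      rw [Finset.image_add_right_Icc]
      congr 1 <;> ring
    rw [himg, Finset.sum_image (by intro a _ b _ h; have h' : a + -1 = b + -1 := h; omega), map_sum]
    apply Finset.sum_congr rfl
    intro j _
    norm_num

private lemma hk_closure_add {U : Set B} (hadd : ∀ x ∈ U, ∀ y ∈ U, x + y ∈ U) :
    ∀ x ∈ closure U, ∀ y ∈ closure U, x + y ∈ closure U := by
  intro x hx y hy
  obtain ⟨f, hf, hfx⟩ := mem_closure_iff_seq_limit.mp hx
  obtain ⟨g, hg, hgy⟩ := mem_closure_iff_seq_limit.mp hy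
  exact mem_closure_of_tendsto (hfx.add hgy)
    (Eventually.of_forall fun n => hadd _ (hf n) _ (hg n))

private lemma hk_closure_smul {U : Set B} (hsmul : ∀ (c : ℂ), ∀ x ∈ U, c • x ∈ U) :
    ∀ (c : ℂ), ∀ x ∈ closure U, c • x ∈ closure U := by
  intro c x hx
  obtain ⟨f, hf, hfx⟩ := mem_closure_iff_seq_limit.mp hx
  exact mem_closure_of_tendsto (hfx.const_smul c)
    (Eventually.of_forall fun n => hsmul c _ (hf n))

private lemma hk_closure_mul {U V W : Set B} (h : ∀ x ∈ U, ∀ y ∈ V, x * y ∈ W) :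
    ∀ x ∈ closure U, ∀ y ∈ closure V, x * y ∈ closure W := by
  intro x hx y hy
  obtain ⟨f, hf, hfx⟩ := mem_closure_iff_seq_limit.mp hx
  obtain ⟨g, hg, hgy⟩ := mem_closure_iff_seq_limit.mp hy
  exact mem_closure_of_tendsto (hfx.mul hgy)
    (Eventually.of_forall fun n => h _ (hf n) _ (hg n))


/-- if `J` is a semi-invariant closed two-sided ideal of `D`, then
`σ^i(J)·σ^k(D) ⊆ σ^{max(i,k)}(J)` elementwise, and `J_σ` is a σ-invariant closed two-sided
ideal of `D_σ`. -/
theorem stmt_14 (σ : B ≃⋆ₐ[ℂ] B) (D : Set B) (hHK : IsHKSystem σ D)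
    (J : Set B) (hJ : IsClosedIdealIn D J)
    (hsemi : ∀ j ∈ J, ∀ e ∈ D, j * σ e ∈ ⇑σ '' J) :
    (∀ i k : ℤ, ∀ j ∈ J, ∀ e ∈ D,
      (σ ^ i) j * (σ ^ k) e ∈ ⇑(σ ^ max i k) '' J) ∧
    IsClosedIdealIn (Dsig σ D) (Dsig σ J) ∧
    ⇑σ '' Dsig σ J = Dsig σ J := by
  obtain ⟨⟨hDc, hD0, hDadd, hDsmul, hDmul, hDstar⟩, hMS, hInt, hND⟩ := hHK
  obtain ⟨hJD, hJc, hJ0, hJadd, hJsmul, hJideal⟩ := hJ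
  have hGD : HkGood D := ⟨hDc, hD0, hDadd, hDsmul⟩
  have hGJ : HkGood J := ⟨hJc, hJ0, hJadd, hJsmul⟩
  have hJmulD : ∀ j ∈ J, ∀ e ∈ D, j * e ∈ J := fun j hj e he => (hJideal e he j hj).2
  have hDmulJ : ∀ e ∈ D, ∀ j ∈ J, e * j ∈ J := fun e he j hj => (hJideal e he j hj).1
  -- approximate units inside J
  have happrox : ∀ x ∈ J, ∃ u : ℕ → B, (∀ n, u n ∈ J) ∧ (∀ n, IsSelfAdjoint (u n)) ∧
      Tendsto (fun n => x * u n) atTop (𝓝 x) := by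
    intro x hx
    obtain ⟨u, humem, husa, hut⟩ := hk_exists_approx x
    refine ⟨u, ?_, husa, hut⟩
    have haJ : star x * x ∈ J := hDmulJ (star x) (hDstar x (hJD hx)) x hx
    refine humem J hJ0 hJadd ?_ haJ (fun p hp => hDmulJ (star x * x) (hJD haJ) p hp)
    intro c p hp
    rw [← algebraMap_smul ℂ c p]
    exact hJsmul _ p hp
  have hJstar : ∀ x ∈ J, star x ∈ J := by
    intro x hx
    obtain ⟨u, humem, husa, hut⟩ := happrox x hx
    have ht : Tendsto (fun n => u n * star x) atTop (𝓝 (star x)) := by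
      have h := hut.star
      have heq : (fun n => star (x * u n)) = fun n => u n * star x := by
        funext n; rw [star_mul, (husa n).star_eq]
      rwa [heq] at h
    exact hJc.mem_of_tendsto ht
      (Eventually.of_forall fun n => hJmulD (u n) (humem n) (star x) (hDstar x (hJD hx)))
  have happroxL : ∀ x ∈ J, ∃ u : ℕ → B, (∀ n, u n ∈ J) ∧
      Tendsto (fun n => u n * x) atTop (𝓝 x) := by
    intro x hx
    obtain ⟨u, humem, husa, hut⟩ := happrox (star x) (hJstar x hx)
    refine ⟨u, humem, ?_⟩
    have h := hut.star
    have heq : (fun n => star (star x * u n)) = fun n => u n * x := by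
      funext n; rw [star_mul, (husa n).star_eq, star_star]
    rwa [heq, star_star] at h
  -- σ(D)·D = σ(D)
  have hMS' : mulSpan (⇑σ '' D) D = ⇑σ '' D := by
    apply Set.eq_of_subset_of_subset
    · intro z hz
      refine hk_mem_of_mulSpan (hGD.image σ) id continuous_id (fun _ _ => rfl)
        (fun c p => Or.inl rfl) ?_ z hz
      rintro _ ⟨p₀, hp₀, rfl⟩ q hq
      have h1 : star q * σ (star p₀) ∈ ⇑σ '' D := by
        rw [← hMS]
        exact hk_mul_mem_mulSpan (hDstar q hq) ⟨star p₀, hDstar p₀ hp₀, rfl⟩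
      obtain ⟨w, hw, hw2⟩ := h1
      refine ⟨star w, hDstar w hw, ?_⟩
      rw [map_star, hw2, star_mul, ← map_star, star_star, star_star]
      rfl
    · rintro _ ⟨e, he, rfl⟩
      have h1 : σ (star e) ∈ mulSpan D (⇑σ '' D) := by
        rw [hMS]; exact ⟨star e, hDstar e he, rfl⟩
      have h2 := hk_mem_of_mulSpan (hk_good_mulSpan (⇑σ '' D) D) star continuous_star
        (fun p q => star_add p q)
        (fun c p => Or.inr (by rw [starRingEnd_apply]; exact star_smul c p))
        ?_ _ h1
      · have h3 : star (σ (star e)) = σ e := by rw [← map_star, star_star]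
        rwa [h3] at h2
      · rintro p hp _ ⟨q₀, hq₀, rfl⟩
        rw [star_mul, ← map_star]
        exact hk_mul_mem_mulSpan ⟨star q₀, hDstar q₀ hq₀, rfl⟩ (hDstar p hp)
  -- image decomposition helpers
  have himg : ∀ (i k : ℤ) (S : Set B), ⇑(σ^(i+k)) '' S = ⇑(σ^i) '' (⇑(σ^k) '' S) := by
    intro i k S
    rw [← Set.image_comp]
    have h : ⇑(σ^(i+k)) = ⇑(σ^i) ∘ ⇑(σ^k) := by rw [zpow_add]; rfl
    rw [h]
  have himg0 : ∀ (S : Set B), ⇑(σ^(0:ℤ)) '' S = S := by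
    intro S
    rw [zpow_zero]
    exact Set.image_id S
  have hcastS : ∀ n : ℕ, ((n+1 : ℕ) : ℤ) = (n:ℤ) + 1 := fun n => by push_cast; ring
  have himgS : ∀ (n : ℕ) (S : Set B),
      ⇑(σ^((n+1:ℕ):ℤ)) '' S = ⇑(σ^((n:ℕ):ℤ)) '' (⇑σ '' S) := by
    intro n S
    rw [hcastS n, himg (n:ℤ) 1 S, zpow_one]
  have happS : ∀ (n : ℕ) (x : B), (σ^((n+1:ℕ):ℤ)) x = (σ^((n:ℕ):ℤ)) (σ x) := by
    intro n x
    rw [hcastS n, hk_zpow_add_apply, hk_zpow_one_apply]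
  -- D · σⁿ(D) ⊆ σⁿ(D)
  have hDDr : ∀ n : ℕ, ∀ d ∈ D, ∀ e ∈ D, d * (σ^((n:ℕ):ℤ)) e ∈ ⇑(σ^((n:ℕ):ℤ)) '' D := by
    intro n
    induction n with
    | zero =>
      intro d hd e he
      rw [Nat.cast_zero, hk_zpow_zero_apply, himg0]
      exact hDmul d hd e he
    | succ n ih =>
      intro d hd e he
      rw [happS n, himgS n]
      have hσe : σ e ∈ mulSpan D (⇑σ '' D) := by rw [hMS]; exact ⟨e, he, rfl⟩
      refine hk_mem_of_mulSpan ((hGD.image σ).image (σ^((n:ℕ):ℤ)))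
        (fun w => d * (σ^((n:ℕ):ℤ)) w)
        (by exact (continuous_const.mul (hk_sae_continuous _)))
        (fun p q => by rw [map_add, mul_add])
        (fun c p => Or.inl (by rw [map_smul, mul_smul_comm])) ?_ (σ e) hσe
      rintro p hp _ ⟨q₀, hq₀, rfl⟩
      rw [map_mul, ← mul_assoc]
      obtain ⟨d₂, hd₂, hd₂e⟩ := ih d hd p hp
      rw [← hd₂e, ← map_mul]
      refine ⟨d₂ * σ q₀, ?_, rfl⟩
      rw [← hMS]
      exact hk_mul_mem_mulSpan hd₂ ⟨q₀, hq₀, rfl⟩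
  -- σⁿ(D) · D ⊆ σⁿ(D)
  have hDDl : ∀ n : ℕ, ∀ d ∈ D, ∀ e ∈ D, ((σ^((n:ℕ):ℤ)) d) * e ∈ ⇑(σ^((n:ℕ):ℤ)) '' D := by
    intro n
    induction n with
    | zero =>
      intro d hd e he
      rw [Nat.cast_zero, hk_zpow_zero_apply, himg0]
      exact hDmul d hd e he
    | succ n ih =>
      intro d hd e he
      rw [happS n, himgS n]
      have hσd : σ d ∈ mulSpan (⇑σ '' D) D := by rw [hMS']; exact ⟨d, hd, rfl⟩
      refine hk_mem_of_mulSpan ((hGD.image σ).image (σ^((n:ℕ):ℤ)))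
        (fun w => ((σ^((n:ℕ):ℤ)) w) * e)
        (by exact ((hk_sae_continuous _).mul continuous_const))
        (fun p q => by rw [map_add, add_mul])
        (fun c p => Or.inl (by rw [map_smul, smul_mul_assoc])) ?_ (σ d) hσd
      rintro _ ⟨p₀, hp₀, rfl⟩ q hq
      rw [map_mul, mul_assoc]
      obtain ⟨d₂, hd₂, hd₂e⟩ := ih q hq e he
      rw [← hd₂e, ← map_mul]
      refine ⟨σ p₀ * d₂, ?_, rfl⟩
      rw [← hMS']
      exact hk_mul_mem_mulSpan ⟨p₀, hp₀, rfl⟩ hd₂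
  -- J · σⁿ(D) ⊆ σⁿ(J)
  have hA : ∀ n : ℕ, ∀ j ∈ J, ∀ e ∈ D, j * (σ^((n:ℕ):ℤ)) e ∈ ⇑(σ^((n:ℕ):ℤ)) '' J := by
    intro n
    induction n with
    | zero =>
      intro j hj e he
      rw [Nat.cast_zero, hk_zpow_zero_apply, himg0]
      exact hJmulD j hj e he
    | succ n ih =>
      intro j hj e he
      rw [happS n, himgS n]
      have hσe : σ e ∈ mulSpan D (⇑σ '' D) := by rw [hMS]; exact ⟨e, he, rfl⟩
      refine hk_mem_of_mulSpan ((hGJ.image σ).image (σ^((n:ℕ):ℤ)))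
        (fun w => j * (σ^((n:ℕ):ℤ)) w)
        (by exact (continuous_const.mul (hk_sae_continuous _)))
        (fun p q => by rw [map_add, mul_add])
        (fun c p => Or.inl (by rw [map_smul, mul_smul_comm])) ?_ (σ e) hσe
      rintro p hp _ ⟨q₀, hq₀, rfl⟩
      rw [map_mul, ← mul_assoc]
      obtain ⟨j₂, hj₂, hj₂e⟩ := ih j hj p hp
      rw [← hj₂e, ← map_mul]
      exact ⟨j₂ * σ q₀, hsemi j₂ hj₂ q₀ hq₀, rfl⟩
  -- σⁿ(J) · D ⊆ σⁿ(J)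
  have hB : ∀ n : ℕ, ∀ j ∈ J, ∀ e ∈ D, ((σ^((n:ℕ):ℤ)) j) * e ∈ ⇑(σ^((n:ℕ):ℤ)) '' J := by
    intro n j hj e he
    obtain ⟨u, humem, husa, hut⟩ := happrox j hj
    have hcl : IsClosed (⇑(σ^((n:ℕ):ℤ)) '' J) := (hGJ.image (σ^((n:ℕ):ℤ))).1
    have htend : Tendsto (fun m => ((σ^((n:ℕ):ℤ)) (j * u m)) * e) atTop
        (𝓝 (((σ^((n:ℕ):ℤ)) j) * e)) := by
      have t1 := ((hk_sae_continuous (σ^((n:ℕ):ℤ))).tendsto j).comp hut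
      exact ((continuous_mul_right e).tendsto _).comp t1
    refine hcl.mem_of_tendsto htend (Eventually.of_forall fun m => ?_)
    rw [map_mul, mul_assoc]
    obtain ⟨d₂, hd₂, hd₂e⟩ := hDDl n (u m) (hJD (humem m)) e he
    rw [← hd₂e, ← map_mul]
    exact ⟨j * d₂, hJmulD j hj d₂ hd₂, rfl⟩
  -- D · σⁿ(J) ⊆ σⁿ(J)
  have hC : ∀ n : ℕ, ∀ d ∈ D, ∀ j ∈ J, d * ((σ^((n:ℕ):ℤ)) j) ∈ ⇑(σ^((n:ℕ):ℤ)) '' J := by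
    intro n d hd j hj
    obtain ⟨v, hvmem, hvt⟩ := happroxL j hj
    have hcl : IsClosed (⇑(σ^((n:ℕ):ℤ)) '' J) := (hGJ.image (σ^((n:ℕ):ℤ))).1
    have htend : Tendsto (fun m => d * ((σ^((n:ℕ):ℤ)) (v m * j))) atTop
        (𝓝 (d * ((σ^((n:ℕ):ℤ)) j))) := by
      have t1 := ((hk_sae_continuous (σ^((n:ℕ):ℤ))).tendsto j).comp hvt
      exact ((continuous_mul_left d).tendsto _).comp t1
    refine hcl.mem_of_tendsto htend (Eventually.of_forall fun m => ?_)
    rw [map_mul, ← mul_assoc]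
    obtain ⟨d₂, hd₂, hd₂e⟩ := hDDr n d hd (v m) (hJD (hvmem m))
    rw [← hd₂e, ← map_mul]
    exact ⟨d₂ * j, hDmulJ d₂ hd₂ j hj, rfl⟩
  -- σⁿ(D) · J ⊆ σⁿ(J)
  have hC' : ∀ n : ℕ, ∀ d ∈ D, ∀ j ∈ J, ((σ^((n:ℕ):ℤ)) d) * j ∈ ⇑(σ^((n:ℕ):ℤ)) '' J := by
    intro n d hd j hj
    obtain ⟨j₂, hj₂, hje⟩ := hA n (star j) (hJstar j hj) (star d) (hDstar d hd)
    refine ⟨star j₂, hJstar j₂ hj₂, ?_⟩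
    rw [map_star, hje, star_mul, ← map_star, star_star, star_star]
  -- Part 1
  have part1 : ∀ i k : ℤ, ∀ j ∈ J, ∀ e ∈ D,
      (σ^i) j * (σ^k) e ∈ ⇑(σ^(max i k)) '' J := by
    intro i k j hj e he
    rcases le_total i k with h | h
    · rw [max_eq_right h]
      set n : ℕ := (k - i).toNat with hn
      have hk2 : k = i + (n:ℤ) := by rw [hn]; omega
      obtain ⟨j₂, hj₂, hje⟩ := hA n j hj e he
      refine ⟨j₂, hj₂, ?_⟩
      calc (σ^k) j₂ = (σ^(i+(n:ℤ))) j₂ := by rw [← hk2]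
        _ = (σ^i) ((σ^((n:ℕ):ℤ)) j₂) := hk_zpow_add_apply σ i n j₂
        _ = (σ^i) (j * (σ^((n:ℕ):ℤ)) e) := by rw [hje]
        _ = (σ^i) j * (σ^i) ((σ^((n:ℕ):ℤ)) e) := map_mul _ _ _
        _ = (σ^i) j * (σ^(i+(n:ℤ))) e := by rw [hk_zpow_add_apply]
        _ = (σ^i) j * (σ^k) e := by rw [← hk2]
    · rw [max_eq_left h]
      set n : ℕ := (i - k).toNat with hn
      have hk2 : i = k + (n:ℤ) := by rw [hn]; omega
      obtain ⟨j₂, hj₂, hje⟩ := hB n j hj e he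
      refine ⟨j₂, hj₂, ?_⟩
      calc (σ^i) j₂ = (σ^(k+(n:ℤ))) j₂ := by rw [← hk2]
        _ = (σ^k) ((σ^((n:ℕ):ℤ)) j₂) := hk_zpow_add_apply σ k n j₂
        _ = (σ^k) ((σ^((n:ℕ):ℤ)) j * e) := by rw [hje]
        _ = (σ^k) ((σ^((n:ℕ):ℤ)) j) * (σ^k) e := map_mul _ _ _
        _ = (σ^(k+(n:ℤ))) j * (σ^k) e := by rw [hk_zpow_add_apply]
        _ = (σ^i) j * (σ^k) e := by rw [← hk2]
  have part1' : ∀ i k : ℤ, ∀ d ∈ D, ∀ j ∈ J,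
      (σ^i) d * (σ^k) j ∈ ⇑(σ^(max i k)) '' J := by
    intro i k d hd j hj
    rcases le_total i k with h | h
    · rw [max_eq_right h]
      set n : ℕ := (k - i).toNat with hn
      have hk2 : k = i + (n:ℤ) := by rw [hn]; omega
      obtain ⟨j₂, hj₂, hje⟩ := hC n d hd j hj
      refine ⟨j₂, hj₂, ?_⟩
      calc (σ^k) j₂ = (σ^(i+(n:ℤ))) j₂ := by rw [← hk2]
        _ = (σ^i) ((σ^((n:ℕ):ℤ)) j₂) := hk_zpow_add_apply σ i n j₂
        _ = (σ^i) (d * (σ^((n:ℕ):ℤ)) j) := by rw [hje]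
        _ = (σ^i) d * (σ^i) ((σ^((n:ℕ):ℤ)) j) := map_mul _ _ _
        _ = (σ^i) d * (σ^(i+(n:ℤ))) j := by rw [hk_zpow_add_apply]
        _ = (σ^i) d * (σ^k) j := by rw [← hk2]
    · rw [max_eq_left h]
      set n : ℕ := (i - k).toNat with hn
      have hk2 : i = k + (n:ℤ) := by rw [hn]; omega
      obtain ⟨j₂, hj₂, hje⟩ := hC' n d hd j hj
      refine ⟨j₂, hj₂, ?_⟩
      calc (σ^i) j₂ = (σ^(k+(n:ℤ))) j₂ := by rw [← hk2]
        _ = (σ^k) ((σ^((n:ℕ):ℤ)) j₂) := hk_zpow_add_apply σ k n j₂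
        _ = (σ^k) ((σ^((n:ℕ):ℤ)) d * j) := by rw [hje]
        _ = (σ^k) ((σ^((n:ℕ):ℤ)) d) * (σ^k) j := map_mul _ _ _
        _ = (σ^(k+(n:ℤ))) d * (σ^k) j := by rw [hk_zpow_add_apply]
        _ = (σ^i) d * (σ^k) j := by rw [← hk2]
  -- Part 2 setup
  set UJ : Set B := ⋃ n : ℕ, Dfin σ J (-(n:ℤ)) n with hUJ_def
  set UD : Set B := ⋃ n : ℕ, Dfin σ D (-(n:ℤ)) n with hUD_def
  have hJsig : Dsig σ J = closure UJ := rfl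
  have hDsig : Dsig σ D = closure UD := rfl
  have hUJ0 : (0:B) ∈ UJ := Set.mem_iUnion.mpr ⟨0, hk_Dfin_zero_mem σ hJ0 _ _⟩
  have hUJadd : ∀ x ∈ UJ, ∀ y ∈ UJ, x + y ∈ UJ := by
    intro x hx y hy
    obtain ⟨n, hn⟩ := Set.mem_iUnion.mp hx
    obtain ⟨m, hm⟩ := Set.mem_iUnion.mp hy
    refine Set.mem_iUnion.mpr ⟨max n m, hk_Dfin_add σ hJadd ?_ ?_⟩
    · exact hk_Dfin_mono σ hJ0 (by push_cast; omega) (by push_cast; omega) hn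
    · exact hk_Dfin_mono σ hJ0 (by push_cast; omega) (by push_cast; omega) hm
  have hUJsmul : ∀ (c : ℂ), ∀ x ∈ UJ, c • x ∈ UJ := by
    intro c x hx
    obtain ⟨n, hn⟩ := Set.mem_iUnion.mp hx
    exact Set.mem_iUnion.mpr ⟨n, hk_Dfin_smul σ hJsmul c hn⟩
  have hUJsingle : ∀ (p : ℤ), ∀ y ∈ ⇑(σ^p) '' J, y ∈ UJ := by
    intro p y hy
    refine Set.mem_iUnion.mpr ⟨p.natAbs + 1, ?_⟩
    exact hk_Dfin_mono σ hJ0 (by omega) (by omega) (hk_Dfin_single σ hJ0 p hy)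
  -- products land in UJ
  have hUmulL : ∀ x ∈ UD, ∀ y ∈ UJ, x * y ∈ UJ := by
    intro x hx y hy
    obtain ⟨n, f, hf, rfl⟩ := Set.mem_iUnion.mp hx
    obtain ⟨m, g, hg, rfl⟩ := Set.mem_iUnion.mp hy
    rw [Finset.sum_mul_sum]
    apply Finset.sum_induction _ (· ∈ UJ) (fun a b ha hb => hUJadd a ha b hb) hUJ0
    intro i hi
    apply Finset.sum_induction _ (· ∈ UJ) (fun a b ha hb => hUJadd a ha b hb) hUJ0
    intro k hk
    obtain ⟨d, hd, hde⟩ := hf i hi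
    obtain ⟨j', hj', hje⟩ := hg k hk
    rw [← hde, ← hje]
    exact hUJsingle _ _ (part1' i k d hd j' hj')
  have hUmulR : ∀ y ∈ UJ, ∀ x ∈ UD, y * x ∈ UJ := by
    intro y hy x hx
    obtain ⟨m, g, hg, rfl⟩ := Set.mem_iUnion.mp hy
    obtain ⟨n, f, hf, rfl⟩ := Set.mem_iUnion.mp hx
    rw [Finset.sum_mul_sum]
    apply Finset.sum_induction _ (· ∈ UJ) (fun a b ha hb => hUJadd a ha b hb) hUJ0
    intro i hi
    apply Finset.sum_induction _ (· ∈ UJ) (fun a b ha hb => hUJadd a ha b hb) hUJ0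
    intro k hk
    obtain ⟨j', hj', hje⟩ := hg i hi
    obtain ⟨d, hd, hde⟩ := hf k hk
    rw [← hje, ← hde]
    exact hUJsingle _ _ (part1 i k j' hj' d hd)
  -- σ-invariance
  have hUinv : ∀ x ∈ UJ, σ x ∈ UJ := by
    intro x hx
    obtain ⟨n, hn⟩ := Set.mem_iUnion.mp hx
    refine Set.mem_iUnion.mpr ⟨n + 1, ?_⟩
    refine hk_Dfin_mono σ hJ0 (by push_cast; omega) (by push_cast; omega) (hk_Dfin_shift σ hn)
  have hUinv' : ∀ x ∈ UJ, σ.symm x ∈ UJ := by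
    intro x hx
    obtain ⟨n, hn⟩ := Set.mem_iUnion.mp hx
    refine Set.mem_iUnion.mpr ⟨n + 1, ?_⟩
    refine hk_Dfin_mono σ hJ0 (by push_cast; omega) (by push_cast; omega) (hk_Dfin_unshift σ hn)
  have hσinv : ⇑σ '' Dsig σ J = Dsig σ J := by
    rw [hJsig]
    apply Set.eq_of_subset_of_subset
    · have h1 : ⇑σ '' closure UJ = closure (⇑σ '' UJ) := by
        rw [← hkHomeo_coe σ]
        exact ((hkHomeo σ).image_closure UJ)
      rw [h1]
      apply closure_mono
      rintro _ ⟨x, hx, rfl⟩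
      exact hUinv x hx
    · intro z hz
      have h2 : σ.symm z ∈ closure UJ := by
        have h1 : ⇑σ.symm '' closure UJ = closure (⇑σ.symm '' UJ) := by
          rw [← hkHomeo_symm_coe σ]
          exact ((hkHomeo σ).symm.image_closure UJ)
        have h3 : σ.symm z ∈ ⇑σ.symm '' closure UJ := ⟨z, hz, rfl⟩
        rw [h1] at h3
        refine closure_mono ?_ h3
        rintro _ ⟨x, hx, rfl⟩
        exact hUinv' x hx
      exact ⟨σ.symm z, h2, σ.apply_symm_apply z⟩
  refine ⟨part1, ⟨?_, isClosed_closure, ?_, ?_, ?_, ?_⟩, hσinv⟩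
  · -- Jσ ⊆ Dσ
    rw [hJsig, hDsig]
    apply closure_mono
    exact Set.iUnion_mono fun n => hk_Dfin_subset σ hJD _ _
  · exact subset_closure hUJ0
  · exact hk_closure_add hUJadd
  · exact hk_closure_smul hUJsmul
  · intro c hc j' hj'
    rw [hJsig] at hj' ⊢
    rw [hDsig] at hc
    exact ⟨hk_closure_mul hUmulL c hc j' hj', hk_closure_mul hUmulR j' hj' c hc⟩


end
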